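/- Let d ≥ 1, κ ≥ 1, β > 0, β₀ ∈ ℝ, and let c > 0 satisfy c‖ξ‖₁ ≤ (1/4)‖ξ‖ for all ξ ∈ ℝ^d. Let v : ℝ^d → ℂ be measurable with N₀ := (∫_{ℝ^d} ‖ξ‖^{2β₀} |v(ξ)|² dξ)^{1/2} < ∞. For t > 0 set M(t) = t^{β/κ} (∫_{ℝ^d} e^{2c t^{1/κ}‖ξ‖₁} e^{−2t‖ξ‖^κ} ‖ξ‖^{2(β₀+β)} |v(ξ)|² dξ)^{1/2}. Then: (i) there is a constant C, depending only on β and κ, with M(t) ≤ C N₀ for all t > 0; and (ii) sup_{0<t<T} M(t) → 0 as T → 0⁺. -/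

import Mathlib

open MeasureTheory
open scoped ENNReal

/-- The quantity
`M(t) = t^{β/κ} (∫ e^{2c t^{1/κ}‖ξ‖₁} e^{−2t‖ξ‖^κ} ‖ξ‖^{2(β₀+β)} |v(ξ)|² dξ)^{1/2}`
of STATEMENT 15, with `‖ξ‖₁ = ∑ᵢ |ξᵢ|`. -/
noncomputable def Mfun (d : ℕ) (κ β β₀ c : ℝ) (v : EuclideanSpace ℝ (Fin d) → ℂ)
    (t : ℝ) : ℝ≥0∞ :=
  ENNReal.ofReal (t ^ (β / κ)) *
    (∫⁻ ξ, ENNReal.ofReal (Real.exp (2 * c * t ^ (1 / κ) * ∑ i, |ξ i|) *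
        Real.exp (-(2 * t * ‖ξ‖ ^ κ)) * ‖ξ‖ ^ (2 * (β₀ + β))) *
      (‖v ξ‖₊ : ℝ≥0∞) ^ 2) ^ (1 / 2 : ℝ)

/-- `N₀ = (∫ ‖ξ‖^{2β₀} |v(ξ)|² dξ)^{1/2}`. -/
noncomputable def N0 (d : ℕ) (β₀ : ℝ) (v : EuclideanSpace ℝ (Fin d) → ℂ) : ℝ≥0∞ :=
  (∫⁻ ξ, ENNReal.ofReal (‖ξ‖ ^ (2 * β₀)) * (‖v ξ‖₊ : ℝ≥0∞) ^ 2) ^ (1 / 2 : ℝ)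

/-- The key scalar inequality. -/
lemma stmt15_key_real (κ β β₀ c S r t : ℝ) (hκ : 1 ≤ κ) (hβ : 0 < β)
    (hS : 0 ≤ S) (hr : 0 < r) (hcs : c * S ≤ 1/4 * r) (ht : 0 < t) :
    t ^ (2*β/κ) * (Real.exp (2*c*t^(1/κ)*S) * Real.exp (-(2*t*r^κ)) * r^(2*(β₀+β)))
      ≤ Real.exp (1/2) * (2*β/κ)^(2*β/κ) * r^(2*β₀) := by
  have hκ0 : (0:ℝ) < κ := lt_of_lt_of_le one_pos hκ
  set a : ℝ := 2*β/κ with ha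
  have ha0 : 0 < a := by positivity
  set s : ℝ := t * r^κ with hs_def
  have hrκ : 0 < r^κ := Real.rpow_pos_of_pos hr κ
  have hs0 : 0 < s := mul_pos ht hrκ
  have h1 : r^(2*(β₀+β)) = r^(2*β₀) * r^(2*β) := by
    rw [← Real.rpow_add hr]; ring_nf
  have h2 : s ^ a = t ^ a * r^(2*β) := by
    have hk : κ * a = 2*β := by rw [ha]; field_simp
    rw [hs_def, Real.mul_rpow ht.le hrκ.le, ← Real.rpow_mul hr.le, hk]
  have ht1κ : 0 ≤ t^(1/κ) := Real.rpow_nonneg ht.le _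
  have h3 : 2*c*t^(1/κ)*S ≤ 1/2 * (t^(1/κ) * r) := by
    nlinarith [mul_le_mul_of_nonneg_left hcs ht1κ]
  have h4 : t^(1/κ) * r = s^(1/κ) := by
    rw [hs_def, Real.mul_rpow ht.le hrκ.le, ← Real.rpow_mul hr.le]
    rw [mul_one_div, div_self hκ0.ne', Real.rpow_one]
  have h5 : s^(1/κ) ≤ 1 + s := by
    rcases le_total s 1 with h | h
    · have := Real.rpow_le_one hs0.le h (by positivity : (0:ℝ) ≤ 1/κ); linarith
    · have h' := Real.rpow_le_rpow_of_exponent_le h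
        (show 1/κ ≤ 1 by rw [div_le_one hκ0]; exact hκ)
      rw [Real.rpow_one] at h'; linarith
  have h6 : Real.exp (2*c*t^(1/κ)*S) * Real.exp (-(2*t*r^κ))
      ≤ Real.exp (1/2) * Real.exp (-s) * Real.exp (-(s/2)) := by
    rw [← Real.exp_add, ← Real.exp_add, ← Real.exp_add]
    apply Real.exp_le_exp.mpr
    have : 2*c*t^(1/κ)*S ≤ 1/2 * (1 + s) := by
      calc 2*c*t^(1/κ)*S ≤ 1/2 * (t^(1/κ) * r) := h3
        _ = 1/2 * s^(1/κ) := by rw [h4]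
        _ ≤ 1/2 * (1 + s) := by linarith
    have hss : -(2*t*r^κ) = -2*s := by rw [hs_def]; ring
    rw [hss]; linarith
  have h7 : s^a * Real.exp (-s) ≤ a^a := by
    have hsa : s ≤ a * Real.exp (s/a) := by
      have h' : s/a ≤ Real.exp (s/a) := by linarith [Real.add_one_le_exp (s/a)]
      rw [div_le_iff₀ ha0] at h'
      linarith [h']
    have hpow : s^a ≤ (a * Real.exp (s/a))^a := Real.rpow_le_rpow hs0.le hsa ha0.le
    have heq : (a * Real.exp (s/a))^a = a^a * Real.exp s := by
      rw [Real.mul_rpow ha0.le (Real.exp_pos _).le]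
      congr 1
      rw [Real.rpow_def_of_pos (Real.exp_pos _), Real.log_exp]
      congr 1; field_simp
    calc s^a * Real.exp (-s) ≤ (a^a * Real.exp s) * Real.exp (-s) := by
          apply mul_le_mul_of_nonneg_right _ (Real.exp_pos _).le
          rw [← heq]; exact hpow
      _ = a^a := by rw [mul_assoc, ← Real.exp_add]; simp
  have hr0 : 0 ≤ r^(2*β₀) := Real.rpow_nonneg hr.le _
  calc t ^ a * (Real.exp (2*c*t^(1/κ)*S) * Real.exp (-(2*t*r^κ)) * r^(2*(β₀+β)))
      = r^(2*β₀) * (s^a * (Real.exp (2*c*t^(1/κ)*S) * Real.exp (-(2*t*r^κ)))) := by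
        rw [h1, h2]; ring
    _ ≤ r^(2*β₀) * (s^a * (Real.exp (1/2) * Real.exp (-s) * Real.exp (-(s/2)))) := by
        gcongr
    _ = r^(2*β₀) * (Real.exp (1/2) * ((s^a * Real.exp (-s)) * Real.exp (-(s/2)))) := by ring
    _ ≤ r^(2*β₀) * (Real.exp (1/2) * (a^a * 1)) := by
        gcongr
        exact Real.exp_le_one_iff.mpr (by linarith)
    _ = Real.exp (1/2) * a^a * r^(2*β₀) := by ring

lemma stmt15_ae_ne_zero (d : ℕ) (hd : 1 ≤ d) :
    ∀ᵐ ξ : EuclideanSpace ℝ (Fin d) ∂volume, ξ ≠ 0 := by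
  haveI : NeZero d := ⟨by omega⟩
  haveI : Nontrivial (EuclideanSpace ℝ (Fin d)) := inferInstance
  rw [MeasureTheory.ae_iff]
  simpa using measure_singleton (0 : EuclideanSpace ℝ (Fin d))

/-- Rewriting `Mfun` with the `t`-power inside the integral. -/
lemma stmt15_Mfun_eq (d : ℕ) (κ β β₀ c : ℝ) (hκ : 1 ≤ κ) (hβ : 0 < β)
    (v : EuclideanSpace ℝ (Fin d) → ℂ) (hv : Measurable v) (t : ℝ) (ht : 0 < t) :
    Mfun d κ β β₀ c v t =
      (∫⁻ ξ, ENNReal.ofReal (t ^ (2*β/κ) *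
          (Real.exp (2 * c * t ^ (1 / κ) * ∑ i, |ξ i|) *
            Real.exp (-(2 * t * ‖ξ‖ ^ κ)) * ‖ξ‖ ^ (2 * (β₀ + β)))) *
        (‖v ξ‖₊ : ℝ≥0∞) ^ 2) ^ (1 / 2 : ℝ) := by
  have hκ0 : (0:ℝ) < κ := lt_of_lt_of_le one_pos hκ
  have ht2 : 0 ≤ t ^ (2*β/κ) := Real.rpow_nonneg ht.le _
  have hmeas : Measurable fun ξ : EuclideanSpace ℝ (Fin d) =>
      ENNReal.ofReal (Real.exp (2 * c * t ^ (1 / κ) * ∑ i, |ξ i|) *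
        Real.exp (-(2 * t * ‖ξ‖ ^ κ)) * ‖ξ‖ ^ (2 * (β₀ + β))) * (‖v ξ‖₊ : ℝ≥0∞) ^ 2 := by
    fun_prop
  have hsplit : (∫⁻ ξ : EuclideanSpace ℝ (Fin d), ENNReal.ofReal (t ^ (2*β/κ) *
          (Real.exp (2 * c * t ^ (1 / κ) * ∑ i, |ξ i|) *
            Real.exp (-(2 * t * ‖ξ‖ ^ κ)) * ‖ξ‖ ^ (2 * (β₀ + β)))) *
        (‖v ξ‖₊ : ℝ≥0∞) ^ 2)
      = ENNReal.ofReal (t ^ (2*β/κ)) *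
        ∫⁻ ξ : EuclideanSpace ℝ (Fin d), ENNReal.ofReal
          (Real.exp (2 * c * t ^ (1 / κ) * ∑ i, |ξ i|) *
            Real.exp (-(2 * t * ‖ξ‖ ^ κ)) * ‖ξ‖ ^ (2 * (β₀ + β))) * (‖v ξ‖₊ : ℝ≥0∞) ^ 2 := by
    rw [← lintegral_const_mul _ hmeas]
    apply lintegral_congr
    intro ξ
    rw [ENNReal.ofReal_mul ht2, mul_assoc]
  rw [hsplit, ENNReal.mul_rpow_of_nonneg _ _ (by norm_num : (0:ℝ) ≤ 1/2)]
  unfold Mfun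
  congr 1
  rw [ENNReal.ofReal_rpow_of_nonneg ht2 (by norm_num), ← Real.rpow_mul ht.le]
  congr 1
  field_simp

/-- The a.e. pointwise domination. -/
lemma stmt15_core (κ β : ℝ) (hκ : 1 ≤ κ) (hβ : 0 < β) (d : ℕ) (hd : 1 ≤ d) (β₀ c : ℝ)
    (hle : ∀ ξ : EuclideanSpace ℝ (Fin d), c * ∑ i, |ξ i| ≤ 1 / 4 * ‖ξ‖)
    (v : EuclideanSpace ℝ (Fin d) → ℂ) (t : ℝ) (ht : 0 < t) :
    ∀ᵐ ξ : EuclideanSpace ℝ (Fin d) ∂volume,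
      ENNReal.ofReal (t ^ (2*β/κ) *
          (Real.exp (2 * c * t ^ (1 / κ) * ∑ i, |ξ i|) *
            Real.exp (-(2 * t * ‖ξ‖ ^ κ)) * ‖ξ‖ ^ (2 * (β₀ + β)))) * (‖v ξ‖₊ : ℝ≥0∞) ^ 2
      ≤ ENNReal.ofReal (Real.exp (1/2) * (2*β/κ)^(2*β/κ)) *
          (ENNReal.ofReal (‖ξ‖ ^ (2 * β₀)) * (‖v ξ‖₊ : ℝ≥0∞) ^ 2) := by
  have hκ0 : (0:ℝ) < κ := lt_of_lt_of_le one_pos hκ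
  have hK0 : 0 ≤ Real.exp (1/2) * (2*β/κ)^(2*β/κ) :=
    mul_nonneg (Real.exp_pos _).le (Real.rpow_nonneg (by positivity) _)
  filter_upwards [stmt15_ae_ne_zero d hd] with ξ hξ
  have hr : 0 < ‖ξ‖ := norm_pos_iff.mpr hξ
  have hS : 0 ≤ ∑ i, |ξ i| := Finset.sum_nonneg fun i _ => abs_nonneg _
  have hkey := stmt15_key_real κ β β₀ c (∑ i, |ξ i|) ‖ξ‖ t hκ hβ hS hr (hle ξ) ht
  calc ENNReal.ofReal (t ^ (2*β/κ) *
          (Real.exp (2 * c * t ^ (1 / κ) * ∑ i, |ξ i|) *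
            Real.exp (-(2 * t * ‖ξ‖ ^ κ)) * ‖ξ‖ ^ (2 * (β₀ + β)))) * (‖v ξ‖₊ : ℝ≥0∞) ^ 2
      ≤ ENNReal.ofReal (Real.exp (1/2) * (2*β/κ)^(2*β/κ) * ‖ξ‖ ^ (2 * β₀)) *
          (‖v ξ‖₊ : ℝ≥0∞) ^ 2 := by
        gcongr
        
    _ = ENNReal.ofReal (Real.exp (1/2) * (2*β/κ)^(2*β/κ)) *
          (ENNReal.ofReal (‖ξ‖ ^ (2 * β₀)) * (‖v ξ‖₊ : ℝ≥0∞) ^ 2) := by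
        rw [ENNReal.ofReal_mul hK0, mul_assoc]

lemma stmt15_bound (κ β : ℝ) (hκ : 1 ≤ κ) (hβ : 0 < β) (d : ℕ) (hd : 1 ≤ d) (β₀ c : ℝ)
    (hle : ∀ ξ : EuclideanSpace ℝ (Fin d), c * ∑ i, |ξ i| ≤ 1 / 4 * ‖ξ‖)
    (v : EuclideanSpace ℝ (Fin d) → ℂ) (hv : Measurable v) (t : ℝ) (ht : 0 < t) :
    Mfun d κ β β₀ c v t ≤
      (ENNReal.ofReal (Real.exp (1/2) * (2*β/κ)^(2*β/κ))) ^ (1/2 : ℝ) * N0 d β₀ v := by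
  have hbase : Measurable fun ξ : EuclideanSpace ℝ (Fin d) =>
      ENNReal.ofReal (‖ξ‖ ^ (2 * β₀)) * (‖v ξ‖₊ : ℝ≥0∞) ^ 2 := by fun_prop
  rw [stmt15_Mfun_eq d κ β β₀ c hκ hβ v hv t ht, N0]
  calc (∫⁻ ξ, ENNReal.ofReal (t ^ (2*β/κ) *
          (Real.exp (2 * c * t ^ (1 / κ) * ∑ i, |ξ i|) *
            Real.exp (-(2 * t * ‖ξ‖ ^ κ)) * ‖ξ‖ ^ (2 * (β₀ + β)))) *
        (‖v ξ‖₊ : ℝ≥0∞) ^ 2) ^ (1 / 2 : ℝ)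
      ≤ (∫⁻ ξ, ENNReal.ofReal (Real.exp (1/2) * (2*β/κ)^(2*β/κ)) *
          (ENNReal.ofReal (‖ξ‖ ^ (2 * β₀)) * (‖v ξ‖₊ : ℝ≥0∞) ^ 2)) ^ (1 / 2 : ℝ) :=
        ENNReal.rpow_le_rpow
          (lintegral_mono_ae (stmt15_core κ β hκ hβ d hd β₀ c hle v t ht))
          (by norm_num)
    _ = (ENNReal.ofReal (Real.exp (1/2) * (2*β/κ)^(2*β/κ)) *
          ∫⁻ ξ, ENNReal.ofReal (‖ξ‖ ^ (2 * β₀)) * (‖v ξ‖₊ : ℝ≥0∞) ^ 2) ^ (1 / 2 : ℝ) := by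
        rw [lintegral_const_mul _ hbase]
    _ = (ENNReal.ofReal (Real.exp (1/2) * (2*β/κ)^(2*β/κ))) ^ (1/2 : ℝ) *
          (∫⁻ ξ, ENNReal.ofReal (‖ξ‖ ^ (2 * β₀)) * (‖v ξ‖₊ : ℝ≥0∞) ^ 2) ^ (1 / 2 : ℝ) :=
        ENNReal.mul_rpow_of_nonneg _ _ (by norm_num)

lemma stmt15_tendsto (κ β : ℝ) (hκ : 1 ≤ κ) (hβ : 0 < β) (d : ℕ) (hd : 1 ≤ d) (β₀ c : ℝ)
    (hle : ∀ ξ : EuclideanSpace ℝ (Fin d), c * ∑ i, |ξ i| ≤ 1 / 4 * ‖ξ‖)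
    (v : EuclideanSpace ℝ (Fin d) → ℂ) (hv : Measurable v) (hN : N0 d β₀ v ≠ ⊤) :
    Filter.Tendsto (fun t => Mfun d κ β β₀ c v t)
      (nhdsWithin 0 (Set.Ioi 0)) (nhds (0 : ℝ≥0∞)) := by
  have hκ0 : (0:ℝ) < κ := lt_of_lt_of_le one_pos hκ
  have ha0 : (0:ℝ) < 2*β/κ := by positivity
  have hbase : Measurable fun ξ : EuclideanSpace ℝ (Fin d) =>
      ENNReal.ofReal (‖ξ‖ ^ (2 * β₀)) * (‖v ξ‖₊ : ℝ≥0∞) ^ 2 := by fun_prop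
  have hI : (∫⁻ ξ, ENNReal.ofReal (‖ξ‖ ^ (2 * β₀)) * (‖v ξ‖₊ : ℝ≥0∞) ^ 2) ≠ ⊤ := by
    intro h
    apply hN
    rw [N0, h, ENNReal.top_rpow_of_pos (by norm_num)]
  set F : ℝ → EuclideanSpace ℝ (Fin d) → ℝ≥0∞ := fun t ξ =>
    ENNReal.ofReal (t ^ (2*β/κ) *
      (Real.exp (2 * c * t ^ (1 / κ) * ∑ i, |ξ i|) *
        Real.exp (-(2 * t * ‖ξ‖ ^ κ)) * ‖ξ‖ ^ (2 * (β₀ + β)))) *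
    (‖v ξ‖₊ : ℝ≥0∞) ^ 2 with hF
  have hDCT : Filter.Tendsto (fun t => ∫⁻ ξ, F t ξ) (nhdsWithin 0 (Set.Ioi 0))
      (nhds (∫⁻ _ : EuclideanSpace ℝ (Fin d), (0:ℝ≥0∞))) := by
    apply tendsto_lintegral_filter_of_dominated_convergence
      (fun ξ => ENNReal.ofReal (Real.exp (1/2) * (2*β/κ)^(2*β/κ)) *
        (ENNReal.ofReal (‖ξ‖ ^ (2 * β₀)) * (‖v ξ‖₊ : ℝ≥0∞) ^ 2))
    · exact Filter.Eventually.of_forall fun t => by rw [hF]; fun_prop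
    · filter_upwards [eventually_mem_nhdsWithin] with t ht
      exact stmt15_core κ β hκ hβ d hd β₀ c hle v t ht
    · rw [lintegral_const_mul _ hbase]
      exact ENNReal.mul_ne_top ENNReal.ofReal_ne_top hI
    · apply Filter.Eventually.of_forall
      intro ξ
      have hta : Filter.Tendsto (fun t : ℝ => t ^ (2*β/κ)) (nhds 0) (nhds 0) := by
        have := (Real.continuousAt_rpow_const 0 (2*β/κ) (Or.inr ha0.le)).tendsto
        rwa [Real.zero_rpow ha0.ne'] at this
      have htκ : Filter.Tendsto (fun t : ℝ => t ^ (1/κ)) (nhds 0) (nhds 0) := by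
        have := (Real.continuousAt_rpow_const 0 (1/κ) (Or.inr (by positivity))).tendsto
        rwa [Real.zero_rpow (by positivity : (0:ℝ) < 1/κ).ne'] at this
      have he1 : Filter.Tendsto (fun t : ℝ => Real.exp (2 * c * t ^ (1 / κ) * ∑ i, |ξ i|))
          (nhds 0) (nhds 1) := by
        have h' : Filter.Tendsto (fun t : ℝ => 2 * c * t ^ (1 / κ) * ∑ i, |ξ i|)
            (nhds 0) (nhds 0) := by
          have := (htκ.const_mul (2 * c)).mul_const (∑ i, |ξ i|)
          simpa [mul_assoc] using this
        simpa [Function.comp_def] using (Real.continuous_exp.tendsto 0).comp h'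
      have he2 : Filter.Tendsto (fun t : ℝ => Real.exp (-(2 * t * ‖ξ‖ ^ κ)))
          (nhds 0) (nhds 1) := by
        have h' : Filter.Tendsto (fun t : ℝ => -(2 * t * ‖ξ‖ ^ κ)) (nhds 0) (nhds 0) := by
          have := ((Filter.tendsto_id (x := nhds (0:ℝ))).const_mul 2).mul_const (‖ξ‖ ^ κ)
          simpa using this.neg
        simpa [Function.comp_def] using (Real.continuous_exp.tendsto 0).comp h'
      have hreal : Filter.Tendsto (fun t : ℝ => t ^ (2*β/κ) *
          (Real.exp (2 * c * t ^ (1 / κ) * ∑ i, |ξ i|) *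
            Real.exp (-(2 * t * ‖ξ‖ ^ κ)) * ‖ξ‖ ^ (2 * (β₀ + β)))) (nhds 0) (nhds 0) := by
        have := hta.mul (((he1.mul he2).mul_const (‖ξ‖ ^ (2 * (β₀ + β)))))
        simpa using this
      have : Filter.Tendsto (fun t => F t ξ) (nhds 0) (nhds 0) := by
        have h0 := ENNReal.Tendsto.mul_const (b := (‖v ξ‖₊ : ℝ≥0∞) ^ 2)
          (ENNReal.tendsto_ofReal hreal)
          (Or.inr (ENNReal.pow_ne_top ENNReal.coe_ne_top))
        simpa [hF] using h0
      exact this.mono_left nhdsWithin_le_nhds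
  rw [lintegral_zero] at hDCT
  have h2 : Filter.Tendsto (fun t => (∫⁻ ξ, F t ξ) ^ (1/2 : ℝ))
      (nhdsWithin 0 (Set.Ioi 0)) (nhds ((0:ℝ≥0∞) ^ (1/2 : ℝ))) :=
    ((ENNReal.continuous_rpow_const (y := 1/2)).tendsto 0).comp hDCT
  rw [ENNReal.zero_rpow_of_pos (by norm_num)] at h2
  apply h2.congr'
  filter_upwards [eventually_mem_nhdsWithin] with t ht
  exact (stmt15_Mfun_eq d κ β β₀ c hκ hβ v hv t ht).symm

/-- Lemma 2.5 for `p = 2`, on the Fourier side: for `κ ≥ 1`, `β > 0`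
there is a constant `C` (depending only on `β` and `κ`) such that, for any `d ≥ 1`,
`β₀ ∈ ℝ`, `c > 0` with `c‖ξ‖₁ ≤ ‖ξ‖/4`, and any measurable `v` with `N₀ < ∞`:
(i) `M(t) ≤ C N₀` for all `t > 0`; and (ii) `sup_{0<t<T} M(t) → 0` as `T → 0⁺`. -/
theorem stmt15 (κ β : ℝ) (hκ : 1 ≤ κ) (hβ : 0 < β) :
    (∃ C : ℝ≥0∞, C ≠ ⊤ ∧
      ∀ d : ℕ, 1 ≤ d → ∀ β₀ c : ℝ, 0 < c →
        (∀ ξ : EuclideanSpace ℝ (Fin d), c * ∑ i, |ξ i| ≤ 1 / 4 * ‖ξ‖) →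
        ∀ v : EuclideanSpace ℝ (Fin d) → ℂ, Measurable v →
          N0 d β₀ v ≠ ⊤ →
          ∀ t : ℝ, 0 < t → Mfun d κ β β₀ c v t ≤ C * N0 d β₀ v) ∧
    (∀ d : ℕ, 1 ≤ d → ∀ β₀ c : ℝ, 0 < c →
      (∀ ξ : EuclideanSpace ℝ (Fin d), c * ∑ i, |ξ i| ≤ 1 / 4 * ‖ξ‖) →
      ∀ v : EuclideanSpace ℝ (Fin d) → ℂ, Measurable v →
        N0 d β₀ v ≠ ⊤ →
        Filter.Tendsto (fun T : ℝ => ⨆ t ∈ Set.Ioo (0 : ℝ) T, Mfun d κ β β₀ c v t)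
          (nhdsWithin 0 (Set.Ioi 0)) (nhds (0 : ℝ≥0∞))) := by
  constructor
  · refine ⟨(ENNReal.ofReal (Real.exp (1/2) * (2*β/κ)^(2*β/κ))) ^ (1/2 : ℝ),
      ENNReal.rpow_ne_top_of_nonneg (by norm_num) ENNReal.ofReal_ne_top, ?_⟩
    intro d hd β₀ c _hc hle v hv _hN t ht
    exact stmt15_bound κ β hκ hβ d hd β₀ c hle v hv t ht
  · intro d hd β₀ c _hc hle v hv hN
    have hM := stmt15_tendsto κ β hκ hβ d hd β₀ c hle v hv hN
    rw [ENNReal.tendsto_nhds_zero]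
    intro ε hε
    have h1 : ∀ᶠ t in nhdsWithin (0:ℝ) (Set.Ioi 0), Mfun d κ β β₀ c v t ≤ ε :=
      (ENNReal.tendsto_nhds_zero.mp hM) ε hε
    rw [(nhdsGT_basis (0:ℝ)).eventually_iff] at h1 ⊢
    obtain ⟨δ, hδ, hδ'⟩ := h1
    refine ⟨δ, hδ, fun T hT => ?_⟩
    apply iSup₂_le
    intro t ht
    exact hδ' ⟨ht.1, lt_of_lt_of_le ht.2 hT.2.le⟩
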